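/- Let B be a von Neumann algebra on a complex Hilbert space G, let E ⊆ B(G,H) be a concrete von Neumann B-module, and let ρ' : B' → B(H) be its commutant lifting. Write an operator S ∈ B(G ⊕ H) on the Hilbert space direct sum G ⊕ H as a 2×2 block matrix with components S₁₁ ∈ B(G), S₁₂ ∈ B(H,G), S₂₁ ∈ B(G,H), S₂₂ ∈ B(H). Then S commutes with every operator of the form (g,h) ↦ (b' g, ρ'(b') h), b' ∈ B', if and only if S₁₁ ∈ B, S₂₁ ∈ E, S₁₂* ∈ E, and S₂₂ commutes with ρ'(b') for every b' ∈ B'. -/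

import Mathlib

noncomputable section

variable {G H K : Type*}
  [NormedAddCommGroup G] [InnerProductSpace ℂ G] [CompleteSpace G]
  [NormedAddCommGroup H] [InnerProductSpace ℂ H] [CompleteSpace H]
  [NormedAddCommGroup K] [InnerProductSpace ℂ K] [CompleteSpace K]

/-- The weak operator topology on `G →L[ℂ] H`: the coarsest topology making all the maps
`T ↦ ⟨h, T g⟩` continuous. -/
def wot (G H : Type*) [NormedAddCommGroup G] [InnerProductSpace ℂ G]
    [NormedAddCommGroup H] [InnerProductSpace ℂ H] : TopologicalSpace (G →L[ℂ] H) :=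
  ⨅ p : G × H, TopologicalSpace.induced
    (fun T : G →L[ℂ] H => (inner ℂ p.2 (T p.1) : ℂ)) inferInstance

/-- The set `{x g : x ∈ E, g ∈ G}` spans a dense subspace of `H`. -/
def SpansDensely (E : Set (G →L[ℂ] H)) : Prop :=
  Dense ((Submodule.span ℂ {h : H | ∃ x ∈ E, ∃ g : G, x g = h} : Submodule ℂ H) : Set H)

/-- `E ⊆ B(G,H)` is a concrete von Neumann `B`-module: a complex linear subspace, stable under
composition with elements of `B` from the right, with `x* ∘ y ∈ B` for all `x, y ∈ E`, acting
nondegenerately on `G`, and closed in the weak operator topology. -/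
structure IsConcreteVNModule (B : VonNeumannAlgebra G) (E : Set (G →L[ℂ] H)) : Prop where
  zero_mem : (0 : G →L[ℂ] H) ∈ E
  add_mem : ∀ x ∈ E, ∀ y ∈ E, x + y ∈ E
  smul_mem : ∀ (c : ℂ), ∀ x ∈ E, c • x ∈ E
  comp_mem : ∀ x ∈ E, ∀ b ∈ B, x.comp b ∈ E
  adjoint_comp_mem : ∀ x ∈ E, ∀ y ∈ E, (ContinuousLinearMap.adjoint x).comp y ∈ B
  dense : SpansDensely E
  isClosed : @IsClosed _ (wot G H) E

/-- A map `ρ : B(G) → B(H)` restricts on the subset `S ⊆ B(G)` to a normal unital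
`*`-homomorphism: it is linear, multiplicative and star-preserving on `S`, unital, and its
restriction to the closed unit ball of `S` is continuous from the weak operator topology of
`B(G)` to the weak operator topology of `B(H)`. -/
structure IsNormalUnitalStarHom (S : Set (G →L[ℂ] G)) (ρ : (G →L[ℂ] G) → (H →L[ℂ] H)) :
    Prop where
  map_add : ∀ a ∈ S, ∀ b ∈ S, ρ (a + b) = ρ a + ρ b
  map_smul : ∀ (c : ℂ), ∀ a ∈ S, ρ (c • a) = c • ρ a
  map_mul : ∀ a ∈ S, ∀ b ∈ S, ρ (a * b) = ρ a * ρ b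
  map_star : ∀ a ∈ S, ρ (star a) = star (ρ a)
  map_one : ρ 1 = 1
  normal : @Continuous {b : G →L[ℂ] G // b ∈ S ∧ ‖b‖ ≤ 1} (H →L[ℂ] H)
    (TopologicalSpace.induced (fun b => b.1) (wot G G)) (wot H H) (fun b => ρ b.1)

/-- The space of intertwiners: `x ∈ B(G,H)` with `ρ(b') ∘ x = x ∘ b'` for all `b' ∈ S`. -/
def intertwinerSpace (S : Set (G →L[ℂ] G)) (ρ : (G →L[ℂ] G) → (H →L[ℂ] H)) :
    Set (G →L[ℂ] H) :=
  {x | ∀ b' ∈ S, (ρ b').comp x = x.comp b'}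

/-- The operator `(g,h) ↦ (b g + c h, x g + a h)` on the Hilbert direct sum `G ⊕ H`. -/
def blockOp (b : G →L[ℂ] G) (c : H →L[ℂ] G) (x : G →L[ℂ] H) (a : H →L[ℂ] H) :
    WithLp 2 (G × H) →L[ℂ] WithLp 2 (G × H) :=
  (((WithLp.prodContinuousLinearEquiv 2 ℂ G H).symm : G × H →L[ℂ] WithLp 2 (G × H)).comp
      (((b.comp (ContinuousLinearMap.fst ℂ G H) + c.comp (ContinuousLinearMap.snd ℂ G H)).prod
        (x.comp (ContinuousLinearMap.fst ℂ G H) +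
          a.comp (ContinuousLinearMap.snd ℂ G H))))).comp
    ((WithLp.prodContinuousLinearEquiv 2 ℂ G H : WithLp 2 (G × H) ≃L[ℂ] G × H) :
      WithLp 2 (G × H) →L[ℂ] G × H)

/-- The `11` entry of an operator on `G ⊕ H`. -/
def block11 (S : WithLp 2 (G × H) →L[ℂ] WithLp 2 (G × H)) : G →L[ℂ] G :=
  (ContinuousLinearMap.fst ℂ G H).comp
    ((((WithLp.prodContinuousLinearEquiv 2 ℂ G H : WithLp 2 (G × H) ≃L[ℂ] G × H) :
        WithLp 2 (G × H) →L[ℂ] G × H).comp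
      (S.comp ((WithLp.prodContinuousLinearEquiv 2 ℂ G H).symm :
        G × H →L[ℂ] WithLp 2 (G × H)))).comp (ContinuousLinearMap.inl ℂ G H))

/-- The `12` entry of an operator on `G ⊕ H`. -/
def block12 (S : WithLp 2 (G × H) →L[ℂ] WithLp 2 (G × H)) : H →L[ℂ] G :=
  (ContinuousLinearMap.fst ℂ G H).comp
    ((((WithLp.prodContinuousLinearEquiv 2 ℂ G H : WithLp 2 (G × H) ≃L[ℂ] G × H) :
        WithLp 2 (G × H) →L[ℂ] G × H).comp
      (S.comp ((WithLp.prodContinuousLinearEquiv 2 ℂ G H).symm :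
        G × H →L[ℂ] WithLp 2 (G × H)))).comp (ContinuousLinearMap.inr ℂ G H))

/-- The `21` entry of an operator on `G ⊕ H`. -/
def block21 (S : WithLp 2 (G × H) →L[ℂ] WithLp 2 (G × H)) : G →L[ℂ] H :=
  (ContinuousLinearMap.snd ℂ G H).comp
    ((((WithLp.prodContinuousLinearEquiv 2 ℂ G H : WithLp 2 (G × H) ≃L[ℂ] G × H) :
        WithLp 2 (G × H) →L[ℂ] G × H).comp
      (S.comp ((WithLp.prodContinuousLinearEquiv 2 ℂ G H).symm :
        G × H →L[ℂ] WithLp 2 (G × H)))).comp (ContinuousLinearMap.inl ℂ G H))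

/-- The `22` entry of an operator on `G ⊕ H`. -/
def block22 (S : WithLp 2 (G × H) →L[ℂ] WithLp 2 (G × H)) : H →L[ℂ] H :=
  (ContinuousLinearMap.snd ℂ G H).comp
    ((((WithLp.prodContinuousLinearEquiv 2 ℂ G H : WithLp 2 (G × H) ≃L[ℂ] G × H) :
        WithLp 2 (G × H) →L[ℂ] G × H).comp
      (S.comp ((WithLp.prodContinuousLinearEquiv 2 ℂ G H).symm :
        G × H →L[ℂ] WithLp 2 (G × H)))).comp (ContinuousLinearMap.inr ℂ G H))


set_option linter.unusedSectionVars false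
set_option maxHeartbeats 1000000
set_option synthInstance.maxHeartbeats 1000000

open scoped InnerProductSpace
open ContinuousLinearMap (adjoint)

/-- A continuous linear map vanishing on a set with dense span is zero. -/
theorem clm_eq_zero_of_dense {s : Set H} (hd : Dense ((Submodule.span ℂ s : Submodule ℂ H) : Set H))
    (T : H →L[ℂ] K) (h0 : ∀ v ∈ s, T v = 0) : T = 0 := by
  have hsub : ((Submodule.span ℂ s : Submodule ℂ H) : Set H) ⊆ {v : H | T v = 0} := by
    intro v hv
    induction hv using Submodule.span_induction with
    | mem v hv => exact h0 v hv
    | zero => simp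
    | add u w _ _ hu hw => simp_all
    | smul c u _ hu => simp_all
  have hclosed : IsClosed {v : H | T v = 0} := isClosed_eq T.continuous continuous_const
  have huniv : {v : H | T v = 0} = Set.univ := by
    apply Set.eq_univ_of_forall
    intro v
    exact hclosed.closure_subset ((hd.mono hsub).closure_eq ▸ Set.mem_univ v)
  ext v
  simpa using (huniv ▸ Set.mem_univ v : v ∈ {v : H | T v = 0})

theorem vec_eq_zero_of_dense {s : Set H} (hd : Dense ((Submodule.span ℂ s : Submodule ℂ H) : Set H))
    (v : H) (h0 : ∀ w ∈ s, (⟪w, v⟫_ℂ) = 0) : v = 0 := by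
  have h1 : (innerSL ℂ v : H →L[ℂ] ℂ) = 0 := by
    apply clm_eq_zero_of_dense hd
    intro w hw
    have : (⟪v, w⟫_ℂ) = 0 := by
      have := congrArg (starRingEnd ℂ) (h0 w hw)
      simpa [inner_conj_symm] using this
    simpa using this
  have h2 := congrFun (congrArg DFunLike.coe h1) v
  simpa [inner_self_eq_zero] using h2

theorem wot_eq_induced : wot G H = TopologicalSpace.induced
    (fun (T : G →L[ℂ] H) (p : G × H) => (inner ℂ p.2 (T p.1) : ℂ)) Pi.topologicalSpace := by
  rw [Pi.topologicalSpace, induced_iInf]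
  unfold wot
  congr 1
  ext p
  rw [induced_compose]

theorem mem_wotClosure {C : Set (G →L[ℂ] H)} {x : G →L[ℂ] H}
    (h : ∀ s : Finset (G × H), ∀ ε > 0, ∃ T ∈ C,
      ∀ p ∈ s, ‖(⟪p.2, T p.1⟫_ℂ) - ⟪p.2, x p.1⟫_ℂ‖ < ε) :
    x ∈ @closure _ (wot G H) C := by
  rw [wot_eq_induced]
  set Φ : (G →L[ℂ] H) → ((G × H) → ℂ) := fun T p => (⟪p.2, T p.1⟫_ℂ) with hΦ
  rw [closure_induced]
  rw [mem_closure_iff_nhds]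
  intro U hU
  rw [nhds_pi, Filter.mem_pi'] at hU
  obtain ⟨I, t, ht, hsub⟩ := hU
  have hball : ∀ p : G × H, ∃ ε > 0, Metric.ball (Φ x p) ε ⊆ t p := by
    intro p
    exact Metric.mem_nhds_iff.1 (ht p)
  choose ε hεpos hεsub using hball
  rcases I.eq_empty_or_nonempty with hI | hI
  · obtain ⟨T, hTC, -⟩ := h I 1 one_pos
    refine ⟨Φ T, hsub ?_, Set.mem_image_of_mem _ hTC⟩
    intro p hp
    simp [hI] at hp
  · set εm := I.inf' hI ε with hεm
    have hεmpos : 0 < εm := (Finset.lt_inf'_iff hI).2 fun p hp => hεpos p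
    obtain ⟨T, hTC, hT⟩ := h I εm hεmpos
    refine ⟨Φ T, hsub ?_, Set.mem_image_of_mem _ hTC⟩
    intro p hp
    apply hεsub p
    rw [Metric.mem_ball, dist_eq_norm]
    exact lt_of_lt_of_le (hT p hp) (Finset.inf'_le ε hp)

theorem rho_star (B : VonNeumannAlgebra G) (E : Set (G →L[ℂ] H))
    (hE : IsConcreteVNModule B E) (ρ' : (G →L[ℂ] G) → (H →L[ℂ] H))
    (hρ : ∀ b' ∈ B.commutant, ∀ x ∈ E, (ρ' b').comp x = x.comp b')
    {b' : G →L[ℂ] G} (hb' : b' ∈ B.commutant) :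
    adjoint (ρ' b') = ρ' (star b') := by
  have hb's : star b' ∈ B.commutant := star_mem hb'
  have hD : adjoint (ρ' b') - ρ' (star b') = 0 := by
    apply clm_eq_zero_of_dense hE.dense
    rintro v ⟨y, hy, g, rfl⟩
    apply vec_eq_zero_of_dense hE.dense
    rintro w ⟨z, hz, g', rfl⟩
    have hc : (adjoint z).comp y ∈ B := hE.adjoint_comp_mem z hz y hy
    set c := (adjoint z).comp y with hcdef
    have hcomm : c * star b' = star b' * c := (VonNeumannAlgebra.mem_commutant_iff.1 hb's) c hc
    have e1 : (⟪z g', (adjoint (ρ' b')) (y g)⟫_ℂ) = ⟪g', (c.comp (star b')) g⟫_ℂ := by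
      rw [ContinuousLinearMap.adjoint_inner_right]
      have : (ρ' b') (z g') = z (b' g') := by
        have := hρ b' hb' z hz
        calc (ρ' b') (z g') = ((ρ' b').comp z) g' := rfl
          _ = (z.comp b') g' := by rw [this]
      rw [this]
      calc (⟪z (b' g'), y g⟫_ℂ) = ⟪b' g', (adjoint z) (y g)⟫_ℂ := by
            rw [ContinuousLinearMap.adjoint_inner_right]
        _ = ⟪b' g', c g⟫_ℂ := rfl
        _ = ⟪g', (adjoint b') (c g)⟫_ℂ := (ContinuousLinearMap.adjoint_inner_right b' g' (c g)).symm
        _ = ⟪g', (c.comp (star b')) g⟫_ℂ := by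
            have : (adjoint b').comp c = c.comp (star b') := by
              rw [← ContinuousLinearMap.star_eq_adjoint]
              exact hcomm.symm
            calc (⟪g', (adjoint b') (c g)⟫_ℂ) = ⟪g', ((adjoint b').comp c) g⟫_ℂ := rfl
              _ = ⟪g', (c.comp (star b')) g⟫_ℂ := by rw [this]
    have e2 : (⟪z g', (ρ' (star b')) (y g)⟫_ℂ) = ⟪g', (c.comp (star b')) g⟫_ℂ := by
      have : (ρ' (star b')) (y g) = y ((star b') g) := by
        have := hρ (star b') hb's y hy
        calc (ρ' (star b')) (y g) = ((ρ' (star b')).comp y) g := rfl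
          _ = (y.comp (star b')) g := by rw [this]
      rw [this]
      calc (⟪z g', y ((star b') g)⟫_ℂ) = ⟪g', (adjoint z) (y ((star b') g))⟫_ℂ := by
            rw [ContinuousLinearMap.adjoint_inner_right]
        _ = ⟪g', (c.comp (star b')) g⟫_ℂ := rfl
    simp only [ContinuousLinearMap.sub_apply, inner_sub_right, e1, e2, sub_self]
  exact sub_eq_zero.1 hD

theorem adj_comp_mem (B : VonNeumannAlgebra G) (E : Set (G →L[ℂ] H))
    (hE : IsConcreteVNModule B E) (ρ' : (G →L[ℂ] G) → (H →L[ℂ] H))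
    (hρ : ∀ b' ∈ B.commutant, ∀ x ∈ E, (ρ' b').comp x = x.comp b')
    {x : G →L[ℂ] H} (hx : ∀ b' ∈ B.commutant, (ρ' b').comp x = x.comp b')
    {y : G →L[ℂ] H} (hy : y ∈ E) : (adjoint y).comp x ∈ B := by
  rw [← B.commutant_commutant]
  rw [VonNeumannAlgebra.mem_commutant_iff]
  intro b' hb'
  have hb's : star b' ∈ B.commutant := star_mem hb'
  have key : b'.comp (adjoint y) = (adjoint y).comp (ρ' b') := by
    have h1 : y.comp (adjoint b') = (ρ' (star b')).comp y := by
      rw [← ContinuousLinearMap.star_eq_adjoint]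
      exact (hρ (star b') hb's y hy).symm
    have h2 := congrArg adjoint h1
    rw [ContinuousLinearMap.adjoint_comp, ContinuousLinearMap.adjoint_adjoint] at h2
    rw [ContinuousLinearMap.adjoint_comp] at h2
    rw [rho_star B E hE ρ' hρ hb's, star_star] at h2
    exact h2
  calc b' * ((adjoint y).comp x) = (b'.comp (adjoint y)).comp x := by
        rw [ContinuousLinearMap.mul_def, ContinuousLinearMap.comp_assoc]
    _ = ((adjoint y).comp (ρ' b')).comp x := by rw [key]
    _ = (adjoint y).comp ((ρ' b').comp x) := by rw [ContinuousLinearMap.comp_assoc]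
    _ = (adjoint y).comp (x.comp b') := by rw [hx b' hb']
    _ = ((adjoint y).comp x) * b' := by
        rw [ContinuousLinearMap.mul_def, ContinuousLinearMap.comp_assoc]

theorem pilp_coord_le {ι : Type*} [Fintype ι] (v : PiLp 2 (fun _ : ι => H)) (i : ι) :
    ‖v i‖ ≤ ‖v‖ := by
  have := PiLp.norm_sq_eq_of_L2 (fun _ : ι => H) v
  nlinarith [Finset.single_le_sum (f := fun j => ‖v j‖^2) (fun j _ => sq_nonneg ‖v j‖)
    (Finset.mem_univ i), norm_nonneg (v i), norm_nonneg v]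

/-- The hard direction: an intertwiner belongs to `E`. -/
theorem intertwiner_mem (B : VonNeumannAlgebra G) (E : Set (G →L[ℂ] H))
    (hE : IsConcreteVNModule B E) (ρ' : (G →L[ℂ] G) → (H →L[ℂ] H))
    (hρ : ∀ b' ∈ B.commutant, ∀ x ∈ E, (ρ' b').comp x = x.comp b')
    {x : G →L[ℂ] H} (hx : ∀ b' ∈ B.commutant, (ρ' b').comp x = x.comp b') : x ∈ E := by
  classical
  set D₀ : Set (H →L[ℂ] H) := {A | ∃ z ∈ E, ∃ y ∈ E, A = z.comp (adjoint y)} with hD₀def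
  have hD₀mul : ∀ A ∈ D₀, ∀ A' ∈ D₀, A.comp A' ∈ D₀ := by
    rintro A ⟨z, hz, y, hy, rfl⟩ A' ⟨z', hz', y', hy', rfl⟩
    refine ⟨z.comp ((adjoint y).comp z'), hE.comp_mem z hz _ (hE.adjoint_comp_mem y hy z' hz'),
      y', hy', ?_⟩
    simp only [ContinuousLinearMap.comp_assoc]
  have hD₀star : ∀ A ∈ D₀, adjoint A ∈ D₀ := by
    rintro A ⟨z, hz, y, hy, rfl⟩
    exact ⟨y, hy, z, hz, by rw [ContinuousLinearMap.adjoint_comp,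
      ContinuousLinearMap.adjoint_adjoint]⟩
  have hTmem : ∀ A ∈ Submodule.span ℂ D₀, (adjoint A).comp x ∈ E := by
    intro A hA
    induction hA using Submodule.span_induction with
    | mem A hA =>
      obtain ⟨z, hz, y, hy, rfl⟩ := hA
      rw [ContinuousLinearMap.adjoint_comp, ContinuousLinearMap.adjoint_adjoint,
        ContinuousLinearMap.comp_assoc]
      exact hE.comp_mem y hy _ (adj_comp_mem B E hE ρ' hρ hx hz)
    | zero => simpa using hE.zero_mem
    | add A A' _ _ hA hA' =>
      rw [map_add, ContinuousLinearMap.add_comp]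
      exact hE.add_mem _ hA _ hA'
    | smul c A _ hA =>
      rw [map_smulₛₗ, ContinuousLinearMap.smul_comp]
      exact hE.smul_mem _ _ hA
  set C : Set (G →L[ℂ] H) := {T | ∃ A ∈ Submodule.span ℂ D₀, T = (adjoint A).comp x} with hCdef
  have hCsub : C ⊆ E := by rintro T ⟨A, hA, rfl⟩; exact hTmem A hA
  have hclC : x ∈ @closure _ (wot G H) C := by
    apply mem_wotClosure
    intro s ε hε
    set ι := {p : G × H // p ∈ s}
    set P := PiLp 2 (fun _ : ι => H) with hPdef
    set hhat : P := WithLp.toLp 2 (fun i : ι => (i : G × H).2) with hhhat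
    set Λ : (H →L[ℂ] H) →ₗ[ℂ] P :=
      { toFun := fun A => WithLp.toLp 2 (fun i => A (hhat i))
        map_add' := by intro A A'; ext i; simp; rfl
        map_smul' := by intro c A; ext i; simp; rfl } with hΛdef
    set V : Submodule ℂ P := (Submodule.span ℂ D₀).map Λ with hVdef
    set W : Submodule ℂ P := V.topologicalClosure with hWdef
    haveI : CompleteSpace P := inferInstance
    haveI : CompleteSpace W := V.isClosed_topologicalClosure.completeSpace_coe
    set Φ : (H →L[ℂ] H) → P → P := fun A v => WithLp.toLp 2 (fun i => A (v i)) with hΦdef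
    have hΦcont : ∀ A, Continuous (Φ A) := by
      intro A
      have : Continuous (fun v : P => (fun i => A (v i) : ∀ _ : ι, H)) := by
        refine continuous_pi fun i => A.continuous.comp ?_
        exact (continuous_apply i).comp (PiLp.continuousLinearEquiv 2 ℂ _).continuous
      exact (PiLp.continuous_toLp 2 _).comp this
    have hΦV : ∀ A ∈ D₀, ∀ v ∈ V, Φ A v ∈ V := by
      rintro A hA v ⟨A', hA', rfl⟩
      refine ⟨A.comp A', ?_, rfl⟩
      induction hA' using Submodule.span_induction with
      | mem A' hA' => exact Submodule.subset_span (hD₀mul A hA A' hA')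
      | zero => simpa using Submodule.zero_mem _
      | add A' A'' _ _ h1 h2 => rw [ContinuousLinearMap.comp_add]; exact Submodule.add_mem _ h1 h2
      | smul c A' _ h1 => rw [ContinuousLinearMap.comp_smul]; exact Submodule.smul_mem _ _ h1
    have hΦW : ∀ A ∈ D₀, ∀ v ∈ W, Φ A v ∈ W := by
      intro A hA v hv
      have h1 : Φ A v ∈ closure (Φ A '' (V : Set P)) :=
        (image_closure_subset_closure_image (hΦcont A)) ⟨v, hv, rfl⟩
      refine closure_mono ?_ h1
      rintro _ ⟨u, hu, rfl⟩
      exact hΦV A hA u hu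
    have hΦorth : ∀ A ∈ D₀, ∀ k, k ∈ Wᗮ → Φ A k ∈ Wᗮ := by
      intro A hA k hk
      rw [Submodule.mem_orthogonal]
      intro w hw
      have key : (⟪w, Φ A k⟫_ℂ) = ⟪Φ (adjoint A) w, k⟫_ℂ := by
        rw [PiLp.inner_apply, PiLp.inner_apply]
        refine Finset.sum_congr rfl fun i _ => ?_
        exact (ContinuousLinearMap.adjoint_inner_left A (k i) (w i)).symm
      rw [key]
      exact (Submodule.mem_orthogonal _ _).1 hk _ (hΦW _ (hD₀star A hA) w hw)
    set k : P := hhat - (W.orthogonalProjectionOnto hhat : P) with hkdef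
    have hkW : k ∈ Wᗮ := Submodule.sub_starProjection_mem_orthogonal (K := W) hhat
    have hAk : ∀ A ∈ D₀, Φ A k = 0 := by
      intro A hA
      have hΛAW : Λ A ∈ W := V.le_topologicalClosure ⟨A, Submodule.subset_span hA, rfl⟩
      have hPW : ((W.orthogonalProjectionOnto hhat : W) : P) ∈ W := Submodule.coe_mem _
      have h1 : Φ A k ∈ W := by
        have e : Φ A k = Λ A - Φ A ((W.orthogonalProjectionOnto hhat : W) : P) := by
          ext i
          show A (hhat i - ((W.orthogonalProjectionOnto hhat : W) : P) i) = _
          rw [map_sub]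
          rfl
        rw [e]
        exact Submodule.sub_mem _ hΛAW (hΦW A hA _ hPW)
      have h2 : Φ A k ∈ Wᗮ := hΦorth A hA k hkW
      have h3 : Φ A k ∈ W ⊓ Wᗮ := Submodule.mem_inf.2 ⟨h1, h2⟩
      rw [Submodule.inf_orthogonal_eq_bot] at h3
      simpa using h3
    have hyk : ∀ y ∈ E, ∀ i : ι, (adjoint y) (k i) = 0 := by
      intro y hy i
      have h0 : y ((adjoint y) (k i)) = 0 := by
        have := congrArg (fun v : P => v i) (hAk (y.comp (adjoint y)) ⟨y, hy, y, hy, rfl⟩)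
        exact this
      have h1 : (⟪(adjoint y) (k i), (adjoint y) (k i)⟫_ℂ) = 0 := by
        rw [ContinuousLinearMap.adjoint_inner_left, h0, inner_zero_right]
      exact inner_self_eq_zero.1 h1
    have hk0 : k = 0 := by
      ext i
      show k i = 0
      apply vec_eq_zero_of_dense hE.dense
      rintro w ⟨u, hu, g, rfl⟩
      rw [← ContinuousLinearMap.adjoint_inner_right, hyk u hu i, inner_zero_right]
    have hhatW : hhat ∈ W := by
      have h4 : hhat = ((W.orthogonalProjectionOnto hhat : W) : P) := by
        have h5 := hk0
        rw [hkdef, sub_eq_zero] at h5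
        exact h5
      rw [h4]
      exact Submodule.coe_mem _
    set Mx : NNReal := s.sup (fun p => ‖x p.1‖₊) with hMx
    set δ : ℝ := ε / (1 + (Mx : ℝ)) with hδdef
    have h1Mx : (0:ℝ) < 1 + (Mx : ℝ) := by positivity
    have hδpos : 0 < δ := div_pos hε h1Mx
    have hhcl : hhat ∈ closure (V : Set P) := by
      rw [← Submodule.topologicalClosure_coe]
      exact hhatW
    rw [Metric.mem_closure_iff] at hhcl
    obtain ⟨w, hwV, hdist⟩ := hhcl δ hδpos
    obtain ⟨A, hA, rfl⟩ := hwV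
    refine ⟨(adjoint A).comp x, ⟨A, hA, rfl⟩, ?_⟩
    intro p hp
    set i : ι := ⟨p, hp⟩ with hidef
    have e1 : (⟪p.2, ((adjoint A).comp x) p.1⟫_ℂ) = ⟪Λ A i, x p.1⟫_ℂ := by
      show (⟪p.2, (adjoint A) (x p.1)⟫_ℂ) = _
      rw [ContinuousLinearMap.adjoint_inner_right]
      rfl
    have e2 : (⟪Λ A i, x p.1⟫_ℂ) - ⟪p.2, x p.1⟫_ℂ = ⟪(Λ A - hhat) i, x p.1⟫_ℂ := by
      have : (Λ A - hhat) i = Λ A i - hhat i := rfl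
      rw [this, inner_sub_left]
    rw [e1, e2]
    have b1 : ‖(⟪(Λ A - hhat) i, x p.1⟫_ℂ)‖ ≤ ‖(Λ A - hhat) i‖ * ‖x p.1‖ :=
      norm_inner_le_norm _ _
    have b2 : ‖(Λ A - hhat) i‖ ≤ ‖Λ A - hhat‖ := pilp_coord_le _ i
    have b3 : ‖Λ A - hhat‖ < δ := by
      rw [← dist_eq_norm, dist_comm]
      exact hdist
    have b4 : ‖x p.1‖ ≤ (Mx : ℝ) := by
      have := Finset.le_sup (f := fun p : G × H => ‖x p.1‖₊) hp
      exact_mod_cast this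
    calc ‖(⟪(Λ A - hhat) i, x p.1⟫_ℂ)‖ ≤ ‖(Λ A - hhat) i‖ * ‖x p.1‖ := b1
      _ ≤ ‖Λ A - hhat‖ * (1 + (Mx : ℝ)) :=
          mul_le_mul b2 (le_trans b4 (by linarith)) (norm_nonneg _) (norm_nonneg _)
      _ < δ * (1 + (Mx : ℝ)) := mul_lt_mul_of_pos_right b3 h1Mx
      _ = ε := by
          rw [hδdef]
          field_simp
  letI : TopologicalSpace (G →L[ℂ] H) := wot G H
  have hxE := closure_mono hCsub hclC
  rwa [(hE.isClosed).closure_eq] at hxE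

section blockfacts

variable (S : WithLp 2 (G × H) →L[ℂ] WithLp 2 (G × H))

local notation "eGH" => WithLp.prodContinuousLinearEquiv 2 ℂ G H

theorem blockOp_apply (b : G →L[ℂ] G) (c : H →L[ℂ] G) (x : G →L[ℂ] H) (a : H →L[ℂ] H)
    (v : WithLp 2 (G × H)) :
    blockOp b c x a v = (eGH).symm (b ((eGH) v).1 + c ((eGH) v).2,
      x ((eGH) v).1 + a ((eGH) v).2) := rfl

theorem block11_apply (g : G) : block11 S g = ((eGH) (S ((eGH).symm (g, 0)))).1 := rfl
theorem block12_apply (h : H) : block12 S h = ((eGH) (S ((eGH).symm (0, h)))).1 := rfl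
theorem block21_apply (g : G) : block21 S g = ((eGH) (S ((eGH).symm (g, 0)))).2 := rfl
theorem block22_apply (h : H) : block22 S h = ((eGH) (S ((eGH).symm (0, h)))).2 := rfl

theorem S_decomp (v : WithLp 2 (G × H)) :
    (eGH) (S v) = (block11 S ((eGH) v).1 + block12 S ((eGH) v).2,
      block21 S ((eGH) v).1 + block22 S ((eGH) v).2) := by
  have hv : v = (eGH).symm (((eGH) v).1, 0) + (eGH).symm (0, ((eGH) v).2) := by
    apply (eGH).injective
    rw [map_add]
    simp [Prod.ext_iff]
  rw [block11_apply, block12_apply, block21_apply, block22_apply]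
  conv_lhs => rw [hv, map_add, map_add]
  rfl

theorem commute_iff (b' : G →L[ℂ] G) (a : H →L[ℂ] H) :
    S * blockOp b' 0 0 a = blockOp b' 0 0 a * S ↔
      ((block11 S).comp b' = b'.comp (block11 S) ∧
        (block12 S).comp a = b'.comp (block12 S) ∧
        (block21 S).comp b' = a.comp (block21 S) ∧
        (block22 S).comp a = a.comp (block22 S)) := by
  constructor
  · intro hcomm
    have hfun : ∀ v, S (blockOp b' 0 0 a v) = blockOp b' 0 0 a (S v) := by
      intro v
      have := congrArg (fun T : WithLp 2 (G × H) →L[ℂ] WithLp 2 (G × H) => T v) hcomm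
      simpa using this
    have main : ∀ q : G × H,
        (block11 S (b' q.1) + block12 S (a q.2), block21 S (b' q.1) + block22 S (a q.2))
          = (b' (block11 S q.1 + block12 S q.2), a (block21 S q.1 + block22 S q.2)) := by
      intro q
      have h1 := hfun ((eGH).symm q)
      have h2 := congrArg (eGH) h1
      rw [S_decomp, blockOp_apply, blockOp_apply, S_decomp] at h2
      simpa using h2
    refine ⟨?_, ?_, ?_, ?_⟩
    · ext g; have := congrArg Prod.fst (main (g, 0)); simpa using this
    · ext h; have := congrArg Prod.fst (main (0, h)); simpa using this
    · ext g; have := congrArg Prod.snd (main (g, 0)); simpa using this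
    · ext h; have := congrArg Prod.snd (main (0, h)); simpa using this
  · rintro ⟨h11, h12, h21, h22⟩
    ext v
    apply (eGH).injective
    show (eGH) (S (blockOp b' 0 0 a v)) = (eGH) (blockOp b' 0 0 a (S v))
    rw [S_decomp, blockOp_apply, blockOp_apply, S_decomp]
    rw [ContinuousLinearEquiv.apply_symm_apply, ContinuousLinearEquiv.apply_symm_apply]
    have e11 := congrArg (fun T : G →L[ℂ] G => T ((eGH) v).1) h11
    have e12 := congrArg (fun T : H →L[ℂ] G => T ((eGH) v).2) h12
    have e21 := congrArg (fun T : G →L[ℂ] H => T ((eGH) v).1) h21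
    have e22 := congrArg (fun T : H →L[ℂ] H => T ((eGH) v).2) h22
    simp only [ContinuousLinearMap.comp_apply] at e11 e12 e21 e22
    have e11' : (block11 S) (b' v.fst) = b' ((block11 S) v.fst) := e11
    have e12' : (block12 S) (a v.snd) = b' ((block12 S) v.snd) := e12
    have e21' : (block21 S) (b' v.fst) = a ((block21 S) v.fst) := e21
    have e22' : (block22 S) (a v.snd) = a ((block22 S) v.snd) := e22
    simp [e11', e12', e21', e22', Prod.ext_iff, map_add]

end blockfacts

/-- `S ∈ B(G ⊕ H)` commutes with all `(g,h) ↦ (b' g, ρ'(b') h)`, `b' ∈ B'`,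
if and only if `S₁₁ ∈ B`, `S₂₁ ∈ E`, `S₁₂* ∈ E` and `S₂₂` commutes with `ρ'(B')`. -/
theorem stmt13 (B : VonNeumannAlgebra G) (E : Set (G →L[ℂ] H))
    (hE : IsConcreteVNModule B E)
    (ρ' : (G →L[ℂ] G) → (H →L[ℂ] H))
    (hρ : ∀ b' ∈ B.commutant, ∀ x ∈ E, (ρ' b').comp x = x.comp b')
    (S : WithLp 2 (G × H) →L[ℂ] WithLp 2 (G × H)) :
    (∀ b' ∈ B.commutant, S * blockOp b' 0 0 (ρ' b') = blockOp b' 0 0 (ρ' b') * S)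
      ↔ (block11 S ∈ B ∧ block21 S ∈ E ∧ ContinuousLinearMap.adjoint (block12 S) ∈ E ∧
          ∀ b' ∈ B.commutant, block22 S * ρ' b' = ρ' b' * block22 S) := by
  constructor
  · intro hcomm
    refine ⟨?_, ?_, ?_, ?_⟩
    · rw [← B.commutant_commutant, VonNeumannAlgebra.mem_commutant_iff]
      intro b' hb'
      have h := ((commute_iff S b' (ρ' b')).1 (hcomm b' hb')).1
      rw [ContinuousLinearMap.mul_def, ContinuousLinearMap.mul_def]
      exact h.symm
    · apply intertwiner_mem B E hE ρ' hρ
      intro b' hb'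
      exact (((commute_iff S b' (ρ' b')).1 (hcomm b' hb')).2.2.1).symm
    · apply intertwiner_mem B E hE ρ' hρ
      intro b'' hb''
      have hb' : star b'' ∈ B.commutant := star_mem hb''
      have h := ((commute_iff S (star b'') (ρ' (star b''))).1 (hcomm _ hb')).2.1
      have h2 := congrArg ContinuousLinearMap.adjoint h
      rw [ContinuousLinearMap.adjoint_comp, ContinuousLinearMap.adjoint_comp,
        rho_star B E hE ρ' hρ hb', star_star,
        ← ContinuousLinearMap.star_eq_adjoint (star b''), star_star] at h2
      exact h2
    · intro b' hb'
      have h := ((commute_iff S b' (ρ' b')).1 (hcomm b' hb')).2.2.2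
      rw [ContinuousLinearMap.mul_def, ContinuousLinearMap.mul_def]
      exact h
  · rintro ⟨h11, h21, h12, h22⟩ b' hb'
    rw [commute_iff]
    have hb's : star b' ∈ B.commutant := star_mem hb'
    refine ⟨?_, ?_, ?_, ?_⟩
    · have h := VonNeumannAlgebra.mem_commutant_iff.1 hb' _ h11
      rw [ContinuousLinearMap.mul_def, ContinuousLinearMap.mul_def] at h
      exact h
    · have h := hρ (star b') hb's _ h12
      have h2 := congrArg ContinuousLinearMap.adjoint h
      rw [ContinuousLinearMap.adjoint_comp, ContinuousLinearMap.adjoint_comp,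
        ContinuousLinearMap.adjoint_adjoint, rho_star B E hE ρ' hρ hb's, star_star,
        ← ContinuousLinearMap.star_eq_adjoint (star b'), star_star] at h2
      exact h2
    · exact (hρ b' hb' _ h21).symm
    · have h := h22 b' hb'
      rw [ContinuousLinearMap.mul_def, ContinuousLinearMap.mul_def] at h
      exact h
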